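/- Let λ, β ≥ 2 with β ≤ λ, let ε₀ ∈ (0,1/8), and suppose |z| ≤ λ^{-1/2}, |τ| ≤ λ^{-1/2}, |t| ≤ 1, and 𝒜(z,τ,t) ≥ β^{-1/2+ε₀}. Then ∂𝒜/∂t (z,τ,t) = sgn(t) + O(λ^{-1}β^{1-2ε₀}), where the implied constant is absolute; i.e., there is an absolute constant C such that |∂𝒜/∂t (z,τ,t) − sgn(t)| ≤ C λ^{-1}β^{1-2ε₀} whenever λ^{-1}β^{1-2ε₀} is at most a fixed absolute constant. -/

import Mathlib

open Complex

set_option maxHeartbeats 1000000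

private lemma aux_Qbound (e R τ2 linv : ℝ) (he0 : 0 < e) (he : e ≤ 3)
    (hR0 : 0 ≤ R) (hR : R ≤ linv) (hτ0 : 0 ≤ τ2) (hτ : τ2 ≤ linv)
    (hl0 : 0 < linv) (hl : linv ≤ 1/2) :
    (1/2) * e * (R^2 + 2*R + τ2) ≤ 6 * linv := by
  have hR2 : R^2 ≤ linv := by nlinarith
  nlinarith

private lemma aux_D (c S linv : ℝ) (hc1 : 1 ≤ c) (hc : c ≤ 2)
    (hS0 : 0 ≤ S) (hS : S ≤ 7 * linv) (hl0 : 0 < linv) (hl : linv ≤ 1/2) :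
    2 * c * S + S^2 ≤ 53 * linv := by nlinarith

private lemma aux_final (X D Qv s a B linv : ℝ)
    (hX0 : 0 ≤ X) (hX : X * s^2 ≤ D + Qv * s)
    (hD : D ≤ 53 * linv) (hQ : Qv ≤ 6 * linv) (hQ0 : 0 ≤ Qv)
    (hl0 : 0 < linv) (ha0 : 0 < a) (hsa : a ≤ s)
    (haB : a^2 * B = 1) (haB1 : 1 ≤ a * B) (hB0 : 0 < B) :
    X ≤ 100 * linv * B := by
  have hs0 : 0 < s := lt_of_lt_of_le ha0 hsa
  have h1 : 53 * linv ≤ 53 * linv * B * s^2 := by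
    have ha2 : a^2 ≤ s^2 := by nlinarith
    have : a^2 * B ≤ s^2 * B := mul_le_mul_of_nonneg_right ha2 hB0.le
    rw [haB] at this
    nlinarith
  have h2 : 6 * linv * s ≤ 47 * linv * B * s^2 := by
    have hsB : 1 ≤ s * B := le_trans haB1 (mul_le_mul_of_nonneg_right hsa hB0.le)
    have : 1 * s ≤ (s * B) * s := mul_le_mul_of_nonneg_right hsB hs0.le
    nlinarith
  have hs2 : (0:ℝ) < s^2 := by positivity
  have h3 : X * s^2 ≤ (100 * linv * B) * s^2 := by nlinarith
  exact le_of_mul_le_mul_right h3 hs2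

theorem radial_derivative_asymptotics :
    ∃ C > (0:ℝ), ∃ c₀ > (0:ℝ),
      ∀ (lam beta ε₀ : ℝ), 2 ≤ lam → 2 ≤ beta → beta ≤ lam → 0 < ε₀ → ε₀ < 1/8 →
      ∀ (z : ℂ) (τ t 𝒜 𝒜' : ℝ),
        ‖z‖ ≤ lam ^ (-(1:ℝ)/2) →
        |τ| ≤ lam ^ (-(1:ℝ)/2) →
        |t| ≤ 1 →
        0 ≤ 𝒜 →
        Real.cosh 𝒜 = Real.cosh t
          + (1/2) * Real.exp (-t) * ((normSq z)^2 + 2 * normSq z + τ^2) + normSq z →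
        beta ^ (-(1:ℝ)/2 + ε₀) ≤ 𝒜 →
        Real.sinh 𝒜 * 𝒜' = Real.sinh t
          - (1/2) * Real.exp (-t) * ((normSq z)^2 + 2 * normSq z + τ^2) →
        lam⁻¹ * beta ^ ((1:ℝ) - 2*ε₀) ≤ c₀ →
        |𝒜' - Real.sign t| ≤ C * lam⁻¹ * beta ^ ((1:ℝ) - 2*ε₀) := by
  refine ⟨100, by norm_num, 1, by norm_num, ?_⟩
  intro lam beta ε₀ hlam hbeta hbl hε hε8 z τ t 𝒜 𝒜' hz hτ ht h𝒜0 hcosh ha hderiv _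
  have hlam0 : (0:ℝ) < lam := by linarith
  have hbeta0 : (0:ℝ) < beta := by linarith
  set R : ℝ := normSq z with hRdef
  set Q : ℝ := (1/2) * Real.exp (-t) * (R^2 + 2*R + τ^2) with hQdef
  set a : ℝ := beta ^ (-(1:ℝ)/2 + ε₀) with hadef
  set B : ℝ := beta ^ ((1:ℝ) - 2*ε₀) with hBdef
  set s : ℝ := Real.sinh 𝒜 with hsdef
  have hR0 : 0 ≤ R := normSq_nonneg z
  have hsq : (lam ^ (-(1:ℝ)/2))^2 = lam⁻¹ := by
    rw [← Real.rpow_natCast (lam ^ (-(1:ℝ)/2)) 2, ← Real.rpow_mul hlam0.le]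
    norm_num [Real.rpow_neg_one]
  have hinv0 : (0:ℝ) < lam⁻¹ := by positivity
  have hinvhalf : lam⁻¹ ≤ 1/2 := by
    rw [inv_le_comm₀ hlam0 (by norm_num)]; linarith
  have hRle : R ≤ lam⁻¹ := by
    rw [← hsq, hRdef, ← Complex.sq_norm]
    exact pow_le_pow_left₀ (norm_nonneg z) hz 2
  have hτ0 : 0 ≤ τ^2 := sq_nonneg τ
  have hτle : τ^2 ≤ lam⁻¹ := by
    rw [← hsq, ← _root_.sq_abs]
    exact pow_le_pow_left₀ (abs_nonneg τ) hτ 2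
  have hexp : Real.exp (-t) ≤ 3 := by
    have h1 : Real.exp (-t) ≤ Real.exp 1 := by
      apply Real.exp_le_exp.mpr
      have := abs_le.mp ht; linarith
    have := Real.exp_one_lt_d9
    linarith
  have hexp0 : 0 < Real.exp (-t) := Real.exp_pos _
  have hQ0 : 0 ≤ Q := by positivity
  have hQle : Q ≤ 6 * lam⁻¹ :=
    aux_Qbound _ _ _ _ hexp0 hexp hR0 hRle hτ0 hτle hinv0 hinvhalf
  have hcosht : Real.cosh t ≤ 2 := by
    have h1 : Real.cosh t ≤ Real.cosh 1 := by
      rw [Real.cosh_le_cosh]; simpa using ht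
    have h2 : Real.cosh 1 ≤ 2 := by
      rw [Real.cosh_eq]
      have := Real.exp_one_lt_d9
      have h3 : Real.exp (-1:ℝ) ≤ 1 := by
        rw [Real.exp_le_one_iff]; norm_num
      linarith
    linarith
  have hcosht1 : 1 ≤ Real.cosh t := Real.one_le_cosh t
  have ha0 : 0 < a := Real.rpow_pos_of_pos hbeta0 _
  have h𝒜a : a ≤ 𝒜 := ha
  have hs𝒜 : 𝒜 ≤ s := Real.self_le_sinh_iff.mpr h𝒜0
  have hsa : a ≤ s := le_trans h𝒜a hs𝒜
  have hs0 : 0 < s := lt_of_lt_of_le ha0 hsa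
  have h𝒜t : |t| ≤ 𝒜 := by
    have h1 : Real.cosh t ≤ Real.cosh 𝒜 := by rw [hcosh]; linarith
    have h2 := Real.cosh_le_cosh.mp h1
    rwa [_root_.abs_of_nonneg h𝒜0] at h2
  have hst : Real.sinh |t| ≤ s := Real.sinh_le_sinh.mpr h𝒜t
  have hst0 : 0 ≤ Real.sinh |t| := by
    rw [← Real.sinh_zero]; exact Real.sinh_le_sinh.mpr (abs_nonneg t)
  have hsign : |Real.sinh t - Real.sign t * s| ≤ s - Real.sinh |t| := by
    rcases lt_trichotomy t 0 with h | h | h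
    · have hmt : Real.sinh (-t) ≤ s := Real.sinh_le_sinh.mpr
        (show -t ≤ 𝒜 from by rw [← _root_.abs_of_neg h]; exact h𝒜t)
      rw [Real.sinh_neg] at hmt
      rw [Real.sign_of_neg h, _root_.abs_of_neg h, Real.sinh_neg]
      have e : Real.sinh t - (-1) * s = Real.sinh t + s := by ring
      rw [e, _root_.abs_of_nonneg (by linarith)]
      linarith
    · subst h
      simp only [Real.sign_zero, Real.sinh_zero, zero_mul, sub_zero, abs_zero]
      linarith
    · have hpt : Real.sinh t ≤ s := Real.sinh_le_sinh.mpr (le_trans (le_abs_self t) h𝒜t)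
      rw [Real.sign_of_pos h, _root_.abs_of_pos h, one_mul, _root_.abs_of_nonpos (by linarith)]
      linarith
  -- product identity
  have hprod : (s - Real.sinh |t|) * (s + Real.sinh |t|)
      = 2 * Real.cosh t * (Q + R) + (Q + R)^2 := by
    have e1 : s^2 = Real.cosh 𝒜 ^2 - 1 := Real.sinh_sq 𝒜
    have e2 : Real.sinh |t| ^2 = Real.cosh t ^2 - 1 := by
      rw [Real.sinh_sq, Real.cosh_abs]
    have e3 : Real.cosh 𝒜 = Real.cosh t + (Q + R) := by rw [hcosh]; ring
    calc (s - Real.sinh |t|) * (s + Real.sinh |t|) = s^2 - Real.sinh |t|^2 := by ring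
      _ = Real.cosh 𝒜 ^2 - Real.cosh t ^2 := by rw [e1, e2]; ring
      _ = (Real.cosh t + (Q + R))^2 - Real.cosh t ^2 := by rw [e3]
      _ = 2 * Real.cosh t * (Q + R) + (Q + R)^2 := by ring
  have hgap : (s - Real.sinh |t|) * s ≤ 2 * Real.cosh t * (Q + R) + (Q + R)^2 := by
    rw [← hprod]
    exact mul_le_mul_of_nonneg_left (by linarith) (by linarith)
  have hD : 2 * Real.cosh t * (Q + R) + (Q + R)^2 ≤ 53 * lam⁻¹ :=
    aux_D _ _ _ hcosht1 hcosht (by linarith) (by linarith) hinv0 hinvhalf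
  -- main estimate multiplied by s^2
  have hmain : |𝒜' - Real.sign t| * s^2 ≤ 53 * lam⁻¹ + Q * s := by
    have h1 : |𝒜' - Real.sign t| * s = |s * 𝒜' - Real.sign t * s| := by
      rw [show s * 𝒜' - Real.sign t * s = (𝒜' - Real.sign t) * s from by ring,
        abs_mul, _root_.abs_of_pos hs0]
    have h2 : |s * 𝒜' - Real.sign t * s| ≤ (s - Real.sinh |t|) + Q := by
      rw [hderiv]
      calc |Real.sinh t - Q - Real.sign t * s|
          = |(Real.sinh t - Real.sign t * s) - Q| := by ring_nf
        _ ≤ |Real.sinh t - Real.sign t * s| + |Q| := abs_sub _ _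
        _ ≤ (s - Real.sinh |t|) + Q := by rw [_root_.abs_of_nonneg hQ0]; linarith
    calc |𝒜' - Real.sign t| * s^2 = (|𝒜' - Real.sign t| * s) * s := by ring
      _ = |s * 𝒜' - Real.sign t * s| * s := by rw [h1]
      _ ≤ ((s - Real.sinh |t|) + Q) * s := mul_le_mul_of_nonneg_right h2 hs0.le
      _ = (s - Real.sinh |t|) * s + Q * s := by ring
      _ ≤ (2 * Real.cosh t * (Q + R) + (Q + R)^2) + Q * s := by linarith
      _ ≤ 53 * lam⁻¹ + Q * s := by linarith
  -- rpow arithmetic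
  have haB : a^2 * B = 1 := by
    rw [hadef, hBdef, sq, ← Real.rpow_add hbeta0, ← Real.rpow_add hbeta0,
      show -(1:ℝ)/2 + ε₀ + (-(1:ℝ)/2 + ε₀) + ((1:ℝ) - 2*ε₀) = 0 from by ring,
      Real.rpow_zero]
  have haB1 : 1 ≤ a * B := by
    rw [hadef, hBdef, ← Real.rpow_add hbeta0]
    apply Real.one_le_rpow (by linarith)
    linarith
  have hB0 : 0 < B := Real.rpow_pos_of_pos hbeta0 _
  have := aux_final (|𝒜' - Real.sign t|) (53 * lam⁻¹) Q s a B lam⁻¹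
    (abs_nonneg _) hmain (le_refl _) hQle hQ0 hinv0 ha0 hsa haB haB1 hB0
  linarith
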